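/- Let p ∈ {2,3,5,7}, q = p−1, and Â_q the untwisted affine Kac-Moody algebra of type A_q. Let μ be a weight of level 0 whose projection to A_q' satisfies μ̄ = Λ̄_i mod A_q. Then for all dominant integral weights Λ of level p and all weights λ of level p, the string functions satisfy c^Λ_{λ+pμ} = c^Λ_{(pΛ_i).λ}, i.e. translating λ by p times a glue vector of class i has the same effect on string functions as applying the simple current pΛ_i. -/

import Mathlib

/-!
STATEMENT 1.
Let p ∈ {2,3,5,7}, q = p−1, and Â_q the untwisted affine Kac-Moody algebra of type A_q.
Let μ be a weight of level 0 whose projection to A_q' satisfies μ̄ = Λ̄_i mod A_q.  Then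
for all dominant integral weights Λ of level p and all weights λ of level p, the string
functions satisfy c^Λ_{λ+pμ} = c^Λ_{(pΛ_i).λ}, i.e. translating λ by p times a glue
vector of class i has the same effect on string functions as applying the simple
current pΛ_i.

Formalization notes.  Weights mod ℂδ are recorded by their labels (n_0,…,n_q); see the
notes in the statement-0 file.  The class of the projection λ̄ = n_1 Λ̄_1 + ⋯ + n_q Λ̄_q
in the congruence group A_q'/A_q ≅ ℤ/pℤ is n_1 + 2n_2 + ⋯ + q·n_q mod p (the class of
the fundamental weight Λ̄_i being i); this is the function `wcls` below.  The string
functions are axiomatized by `StringFunctions`, with their affine Weyl group invariance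
(Kac (12.7.9)) as the field `weyl_invariant`.
-/

open scoped BigOperators

/-- Labels `(n_0, …, n_q)`, `q = p − 1`, of a weight of the untwisted affine Kac–Moody
algebra `Â_q` of type `A_q`, taken modulo `ℂδ`. -/
abbrev AffWt (p : ℕ) := Fin p → ℤ

/-- The level `n_0 + ⋯ + n_q` of a weight. -/
def wlevel {p : ℕ} (n : AffWt p) : ℤ := ∑ i, n i

/-- A weight is dominant integral iff all its labels are nonnegative. -/
def IsDominant {p : ℕ} (n : AffWt p) : Prop := ∀ i, 0 ≤ n i

/-- The class of the projection `λ̄` of the weight with labels `n` in the congruence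
group `A_q'/A_q ≅ ℤ/pℤ`; the class of `Λ̄_i` is `i`. -/
def wcls {p : ℕ} (n : AffWt p) : ZMod p := ∑ i, (i.1 : ZMod p) * (n i : ZMod p)

/-- The simple current `pΛ_i` of `Â_{p-1}` at level `p` acts on level-`p` weights by
cyclically shifting the labels: `(pΛ_i).(n_0,…,n_q) = (n_{q+1−i},…,n_{q−i})`. -/
def simpleCurrent {p : ℕ} [NeZero p] (i : Fin p) (n : AffWt p) : AffWt p :=
  fun k => n (k - i)

/-- The entries `a_{ij}` of the affine Cartan matrix of `Â_{p-1}` (cyclic `A`-type;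
for `p = 2` this correctly yields `a_{01} = a_{10} = −2`). -/
def affCartan {p : ℕ} [NeZero p] (i j : Fin p) : ℤ :=
  (if i = j then 2 else 0) - (if j = i + 1 then 1 else 0) - (if j = i - 1 then 1 else 0)

/-- The simple affine reflection `s_i` of the affine Weyl group `Ŵ` of `Â_{p-1}`,
acting on weights in label coordinates: `s_i(λ)_j = n_j − a_{ji} n_i`. -/
def affReflect {p : ℕ} [NeZero p] (i : Fin p) (n : AffWt p) : AffWt p :=
  fun j => n j - affCartan j i * n i

/-- The string functions `c_λ^Λ` of the affine Kac–Moody algebra `Â_{p-1}` at level `p`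
(Kac, §12.7), recorded in label coordinates as functions of `τ`; the field
`weyl_invariant` is their invariance under the affine Weyl group, Kac (12.7.9). -/
structure StringFunctions (p : ℕ) [NeZero p] where
  c : AffWt p → AffWt p → ℂ → ℂ
  weyl_invariant : ∀ (Λ lam : AffWt p) (i : Fin p), c Λ (affReflect i lam) = c Λ lam

set_option linter.unusedSectionVars false
namespace SF1
open Fin.NatCast

variable {p : ℕ} [NeZero p]

/-- indicator vector -/
def Ee (a : Fin p) : AffWt p := fun k => if k = a then 1 else 0

/-- The label action of the affine-Weyl element `m₁ = s₁s₂⋯s_{p-1}` (on level-`p` weights). -/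
def Mm (n : AffWt p) : AffWt p := fun k => n (k + 1) + (p : ℤ) * (Ee 0 k - Ee (-1) k)

/-- Inverse of `Mm`. -/
def Pm (n : AffWt p) : AffWt p := fun k => n (k - 1) + (p : ℤ) * (Ee 0 k - Ee 1 k)

/-- Translation by `p` times the `j`-th simple root. -/
def Trm (j : Fin p) (n : AffWt p) : AffWt p := fun k => n k + (p : ℤ) * affCartan k j

lemma sum_Ee (a : Fin p) : ∑ k, Ee a k = 1 := by
  simp [Ee]

lemma colsum (j : Fin p) : ∑ k, affCartan k j = 0 := by
  unfold affCartan
  rw [show (fun k : Fin p => (if k = j then (2:ℤ) else 0) - (if j = k + 1 then 1 else 0)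
      - (if j = k - 1 then 1 else 0)) = fun k => (if k = j then (2:ℤ) else 0)
      - (if k = j - 1 then 1 else 0) - (if k = j + 1 then 1 else 0) from ?_]
  · simp [Finset.sum_sub_distrib]
  · funext k
    congr 1
    · congr 1
      congr 1
      apply propext
      constructor
      · rintro rfl; exact (add_sub_cancel_right k 1).symm
      · rintro rfl; exact (sub_add_cancel j 1).symm
    · congr 1
      apply propext
      constructor
      · rintro rfl; exact (sub_add_cancel k 1).symm
      · rintro rfl; exact (add_sub_cancel_right j 1).symm

lemma wlevel_A (i : Fin p) (n : AffWt p) : wlevel (affReflect i n) = wlevel n := by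
  unfold wlevel affReflect
  rw [Finset.sum_sub_distrib, ← Finset.sum_mul, colsum, zero_mul, sub_zero]

lemma sum_shift (a : Fin p) (n : AffWt p) : ∑ k, n (k + a) = ∑ k, n k :=
  Fintype.sum_equiv (Equiv.addRight a) _ _ (fun _ => rfl)

lemma sum_shift' (a : Fin p) (n : AffWt p) : ∑ k, n (k - a) = ∑ k, n k :=
  Fintype.sum_equiv (Equiv.subRight a) _ _ (fun _ => rfl)

lemma wlevel_M (n : AffWt p) : wlevel (Mm n) = wlevel n := by
  unfold wlevel Mm
  rw [Finset.sum_add_distrib, ← Finset.mul_sum, Finset.sum_sub_distrib, sum_Ee, sum_Ee,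
    sub_self, mul_zero, add_zero, sum_shift]

lemma wlevel_P (n : AffWt p) : wlevel (Pm n) = wlevel n := by
  unfold wlevel Pm
  rw [Finset.sum_add_distrib, ← Finset.mul_sum, Finset.sum_sub_distrib, sum_Ee, sum_Ee,
    sub_self, mul_zero, add_zero, sum_shift']

lemma wlevel_Tr (j : Fin p) (n : AffWt p) : wlevel (Trm j n) = wlevel n := by
  unfold wlevel Trm
  rw [Finset.sum_add_distrib, ← Finset.mul_sum, colsum, mul_zero, add_zero]

lemma MP (n : AffWt p) : Mm (Pm n) = n := by
  funext k
  unfold Mm Pm Ee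
  rw [add_sub_cancel_right]
  have h1 : (if k + 1 = 0 then (1:ℤ) else 0) = (if k = -1 then 1 else 0) := by
    apply if_congr _ rfl rfl
    constructor
    · intro h; simpa [eq_neg_iff_add_eq_zero] using h
    · rintro rfl; simp
  have h2 : (if k + 1 = 1 then (1:ℤ) else 0) = (if k = 0 then 1 else 0) := by
    apply if_congr _ rfl rfl
    constructor
    · intro h
      have := congrArg (· - 1) h
      simpa [add_sub_cancel_right] using this
    · rintro rfl; simp
  rw [h1, h2]
  ring


variable (S : StringFunctions p) (Λ : AffWt p)

/-- invariance under `Pm`, from invariance under `Mm`. -/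
lemma Pinv (hM : ∀ n, wlevel n = p → S.c Λ (Mm n) = S.c Λ n)
    (n : AffWt p) (hn : wlevel n = p) : S.c Λ (Pm n) = S.c Λ n := by
  have h := hM (Pm n) (by rw [wlevel_P, hn])
  rw [MP] at h
  exact h.symm

/-- the weight occurring in the `t`-fold application of `Pm`. -/
def Lw (t : ℕ) (n : AffWt p) : AffWt p :=
  fun k => n (k - (t : Fin p)) + (p : ℤ) * (Ee 0 k - Ee (t : Fin p) k)

lemma wlevel_Lw (t : ℕ) (n : AffWt p) : wlevel (Lw t n) = wlevel n := by
  unfold wlevel Lw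
  rw [Finset.sum_add_distrib, ← Finset.mul_sum, Finset.sum_sub_distrib, sum_Ee, sum_Ee,
    sub_self, mul_zero, add_zero]
  exact sum_shift' _ n

lemma Lw_succ (t : ℕ) (n : AffWt p) : Lw (t + 1) n = Pm (Lw t n) := by
  funext k
  simp only [Lw, Pm, Ee]
  have h1 : (if k - 1 = 0 then (1:ℤ) else 0) = (if k = 1 then 1 else 0) := by
    apply if_congr _ rfl rfl
    rw [sub_eq_zero]
  have h2 : (if k - 1 = (t : Fin p) then (1:ℤ) else 0)
      = (if k = ((t:ℕ)+1 : ℕ) then 1 else 0) := by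
    apply if_congr _ rfl rfl
    push_cast
    rw [sub_eq_iff_eq_add]
  have h3 : k - 1 - (t : Fin p) = k - (((t:ℕ)+1 : ℕ) : Fin p) := by
    push_cast
    rw [sub_sub, add_comm (1 : Fin p)]
  rw [h1, h2, h3]
  have h4 : (if k = (((t:ℕ)+1 : ℕ) : Fin p) then (1:ℤ) else 0)
      = (if k = ((t : Fin p) + 1) then 1 else 0) := by
    apply if_congr _ rfl rfl
    push_cast
    rfl
  rw [h4]
  push_cast
  ring

lemma L2 (hM : ∀ n, wlevel n = p → S.c Λ (Mm n) = S.c Λ n) (t : ℕ) :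
    ∀ n : AffWt p, wlevel n = p → S.c Λ (Lw t n) = S.c Λ n := by
  induction t with
  | zero =>
    intro n hn
    have : Lw 0 n = n := by
      funext k
      unfold Lw
      simp
    rw [this]
  | succ t ih =>
    intro n hn
    rw [Lw_succ, Pinv S Λ hM _ (by rw [wlevel_Lw]; exact hn), ih n hn]

lemma M_Tr (j : Fin p) (n : AffWt p) : Mm (Trm (j + 1) n) = Trm j (Mm n) := by
  funext k
  unfold Mm Trm
  have h : affCartan (k + 1) (j + 1) = affCartan k j := by
    unfold affCartan
    rw [add_sub_cancel_right]
    have e1 : (if k + 1 = j + 1 then (2:ℤ) else 0) = (if k = j then 2 else 0) :=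
      if_congr (add_left_inj 1) rfl rfl
    have e2 : (if j + 1 = k + 1 + 1 then (1:ℤ) else 0) = (if j = k + 1 then 1 else 0) :=
      if_congr (add_left_inj 1) rfl rfl
    have e3 : (if j + 1 = k then (1:ℤ) else 0) = (if j = k - 1 then 1 else 0) :=
      if_congr (by rw [eq_sub_iff_add_eq]) rfl rfl
    rw [e1, e2, e3]
  rw [h]
  ring

lemma Tall (hM : ∀ n, wlevel n = p → S.c Λ (Mm n) = S.c Λ n)
    (hT1 : ∀ n, wlevel n = p → S.c Λ (Trm 1 n) = S.c Λ n) :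
    ∀ (j : Fin p) (n : AffWt p), wlevel n = p → S.c Λ (Trm j n) = S.c Λ n := by
  have key : ∀ t : ℕ, ∀ n : AffWt p, wlevel n = p →
      S.c Λ (Trm (1 + (t : Fin p)) n) = S.c Λ n := by
    intro t
    induction t with
    | zero => intro n hn; simpa using hT1 n hn
    | succ t ih =>
      intro n hn
      have hcast : (1 + ((t:ℕ)+1 : ℕ) : Fin p) = (1 + (t : Fin p)) + 1 := by
        push_cast
        abel
      rw [hcast]
      have lvl : wlevel (Trm ((1 + (t : Fin p)) + 1) n) = p := by rw [wlevel_Tr]; exact hn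
      rw [← hM _ lvl, M_Tr, ih (Mm n) (by rw [wlevel_M]; exact hn),
        hM n hn]
  intro j n hn
  have : j = 1 + ((j - 1).val : Fin p) := by
    rw [Fin.cast_val_eq_self, add_sub_cancel]
  rw [this] at *
  exact key (j-1).val n hn

/-- weight with a multiple of a column added -/
def Zw (z : ℤ) (j : Fin p) (n : AffWt p) : AffWt p :=
  fun k => n k + (p : ℤ) * (z * affCartan k j)

lemma wlevel_Zw (z : ℤ) (j : Fin p) (n : AffWt p) : wlevel (Zw z j n) = wlevel n := by
  unfold wlevel Zw
  rw [Finset.sum_add_distrib, ← Finset.mul_sum, ← Finset.mul_sum, colsum, mul_zero,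
    mul_zero, add_zero]

lemma Tz (hM : ∀ n, wlevel n = p → S.c Λ (Mm n) = S.c Λ n)
    (hT1 : ∀ n, wlevel n = p → S.c Λ (Trm 1 n) = S.c Λ n)
    (z : ℤ) (j : Fin p) : ∀ n : AffWt p, wlevel n = p → S.c Λ (Zw z j n) = S.c Λ n := by
  induction z using Int.induction_on with
  | zero => intro n hn; unfold Zw; simp
  | succ z ih =>
    intro n hn
    have : Zw (z + 1) j n = Trm j (Zw z j n) := by
      funext k; unfold Zw Trm; ring
    rw [this, Tall S Λ hM hT1 j _ (by rw [wlevel_Zw]; exact hn), ih n hn]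
  | pred z ih =>
    intro n hn
    have e : Zw (-z) j n = Trm j (Zw (-z - 1) j n) := by
      funext k; unfold Zw Trm; ring
    have lvl : wlevel (Zw (-z - 1) j n) = p := by rw [wlevel_Zw]; exact hn
    calc S.c Λ (Zw (-z - 1) j n)
        = S.c Λ (Trm j (Zw (-z - 1) j n)) := (Tall S Λ hM hT1 j _ lvl).symm
      _ = S.c Λ (Zw (-z) j n) := by rw [← e]
      _ = S.c Λ n := ih n hn

/-- weight with a linear combination of columns over a finset added -/
def Sw (d : Fin p → ℤ) (s : Finset (Fin p)) (n : AffWt p) : AffWt p :=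
  fun k => n k + (p : ℤ) * ∑ j ∈ s, d j * affCartan k j

lemma wlevel_Sw (d : Fin p → ℤ) (s : Finset (Fin p)) (n : AffWt p) :
    wlevel (Sw d s n) = wlevel n := by
  unfold wlevel Sw
  rw [Finset.sum_add_distrib, ← Finset.mul_sum, Finset.sum_comm]
  have : ∀ j ∈ s, ∑ k, d j * affCartan k j = 0 := by
    intro j _
    rw [← Finset.mul_sum, colsum, mul_zero]
  rw [Finset.sum_congr rfl this]
  simp

lemma Tsum (hM : ∀ n, wlevel n = p → S.c Λ (Mm n) = S.c Λ n)
    (hT1 : ∀ n, wlevel n = p → S.c Λ (Trm 1 n) = S.c Λ n)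
    (d : Fin p → ℤ) (s : Finset (Fin p)) :
    ∀ n : AffWt p, wlevel n = p → S.c Λ (Sw d s n) = S.c Λ n := by
  induction s using Finset.induction_on with
  | empty =>
    intro n hn
    have : Sw d ∅ n = n := by funext k; unfold Sw; simp
    rw [this]
  | insert a s ha ih =>
    intro n hn
    have e : Sw d (insert a s) n = Zw (d a) a (Sw d s n) := by
      funext k
      unfold Sw Zw
      rw [Finset.sum_insert ha]
      ring
    rw [e, Tz S Λ hM hT1 (d a) a _ (by rw [wlevel_Sw]; exact hn), ih n hn]

lemma double_sum {M : Type*} [AddCommMonoid M] (f : ℕ → M) (N : ℕ) :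
    ∑ k ∈ Finset.range N, ∑ j ∈ Finset.range k, f j
      = ∑ j ∈ Finset.range N, (N - 1 - j) • f j := by
  induction N with
  | zero => simp
  | succ N ih =>
    rw [Finset.sum_range_succ, ih, Finset.sum_range_succ (fun j => (N + 1 - 1 - j) • f j)]
    have h0 : (N + 1 - 1 - N) = 0 := by omega
    rw [h0, zero_smul, add_zero, ← Finset.sum_add_distrib]
    apply Finset.sum_congr rfl
    intro j hj
    have hj' : j < N := Finset.mem_range.mp hj
    have : N + 1 - 1 - j = (N - 1 - j) + 1 := by omega
    rw [this, add_smul, one_smul]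

def Wn (w : AffWt p) : ℕ → ℤ := fun m => w (m : Fin p)
def Sn (w : AffWt p) (s0 : ℤ) : ℕ → ℤ := fun m => s0 + ∑ j ∈ Finset.range m, Wn w (j + 1)
def Dn (w : AffWt p) (s0 : ℤ) : ℕ → ℤ := fun m => -∑ j ∈ Finset.range m, Sn w s0 j

lemma Wn_per (w : AffWt p) (m : ℕ) : Wn w (m + p) = Wn w m := by
  simp [Wn, Nat.cast_add]

lemma sumW (w : AffWt p) (hl : wlevel w = 0) (a : ℕ) :
    ∑ j ∈ Finset.range p, Wn w (a + j) = 0 := by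
  have cast : ∀ j : ℕ, Wn w (a + j) = w ((a : Fin p) + (j : Fin p)) := by
    intro j; simp [Wn, Nat.cast_add]
  calc ∑ j ∈ Finset.range p, Wn w (a + j)
      = ∑ j ∈ Finset.range p, w ((a : Fin p) + (j : Fin p)) :=
        Finset.sum_congr rfl (fun j _ => cast j)
    _ = ∑ k : Fin p, w ((a : Fin p) + k) := by
        rw [← Fin.sum_univ_eq_sum_range (fun j : ℕ => w ((a : Fin p) + (j : Fin p))) p]
        simp [Fin.cast_val_eq_self]
    _ = ∑ k : Fin p, w k :=
        Fintype.sum_equiv (Equiv.addLeft (a : Fin p)) _ _ (fun _ => rfl)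
    _ = 0 := hl

lemma Sn_step (w : AffWt p) (s0 : ℤ) (m : ℕ) :
    Sn w s0 (m + 1) = Sn w s0 m + Wn w (m + 1) := by
  simp [Sn, Finset.sum_range_succ, add_assoc]

lemma Sn_per (w : AffWt p) (s0 : ℤ) (hl : wlevel w = 0) (m : ℕ) :
    Sn w s0 (m + p) = Sn w s0 m := by
  unfold Sn
  have h1 : ∑ j ∈ Finset.range (m + p), Wn w (j + 1)
      = ∑ j ∈ Finset.range m, Wn w (j + 1)
        + ∑ j ∈ Finset.Ico m (m + p), Wn w (j + 1) := by
    rw [Finset.range_eq_Ico,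
      ← Finset.sum_Ico_consecutive _ (Nat.zero_le m) (Nat.le_add_right m p),
      ← Finset.range_eq_Ico]
  have h2 : ∑ j ∈ Finset.Ico m (m + p), Wn w (j + 1)
      = ∑ j ∈ Finset.range p, Wn w ((m + 1) + j) := by
    rw [Finset.sum_Ico_eq_sum_range]
    have : m + p - m = p := by omega
    rw [this]
    exact Finset.sum_congr rfl (fun j _ => by congr 1; omega)
  rw [h1, h2, sumW w hl, add_zero]

lemma Sn_sum_shift (w : AffWt p) (s0 : ℤ) (hl : wlevel w = 0)
    (h0 : ∑ k ∈ Finset.range p, Sn w s0 k = 0) (a : ℕ) :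
    ∑ k ∈ Finset.range p, Sn w s0 (a + k) = 0 := by
  induction a with
  | zero => simpa using h0
  | succ a ih =>
    have h1 : ∑ k ∈ Finset.range p, Sn w s0 (a + 1 + k)
        = ∑ k ∈ Finset.range p, Sn w s0 (a + (k + 1)) :=
      Finset.sum_congr rfl (fun k _ => by congr 1; omega)
    have h2 : ∑ k ∈ Finset.range (p + 1), Sn w s0 (a + k)
        = (∑ k ∈ Finset.range p, Sn w s0 (a + (k + 1))) + Sn w s0 (a + 0) :=
      Finset.sum_range_succ' (fun k => Sn w s0 (a + k)) p
    have h3 : ∑ k ∈ Finset.range (p + 1), Sn w s0 (a + k)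
        = (∑ k ∈ Finset.range p, Sn w s0 (a + k)) + Sn w s0 (a + p) :=
      Finset.sum_range_succ (fun k => Sn w s0 (a + k)) p
    have h4 : Sn w s0 (a + p) = Sn w s0 (a + 0) := by
      rw [Nat.add_zero]; exact Sn_per w s0 hl a
    rw [h1]
    have := h3.symm.trans h2
    rw [ih, h4, zero_add] at this
    omega

lemma Dn_step (w : AffWt p) (s0 : ℤ) (m : ℕ) :
    Dn w s0 (m + 1) = Dn w s0 m - Sn w s0 m := by
  simp [Dn, Finset.sum_range_succ]
  ring

lemma Dn_per (w : AffWt p) (s0 : ℤ) (hl : wlevel w = 0)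
    (h0 : ∑ k ∈ Finset.range p, Sn w s0 k = 0) (m : ℕ) :
    Dn w s0 (m + p) = Dn w s0 m := by
  unfold Dn
  have h1 : ∑ j ∈ Finset.range (m + p), Sn w s0 j
      = ∑ j ∈ Finset.range m, Sn w s0 j + ∑ j ∈ Finset.Ico m (m + p), Sn w s0 j := by
    rw [Finset.range_eq_Ico,
      ← Finset.sum_Ico_consecutive _ (Nat.zero_le m) (Nat.le_add_right m p),
      ← Finset.range_eq_Ico]
  have h2 : ∑ j ∈ Finset.Ico m (m + p), Sn w s0 j
      = ∑ j ∈ Finset.range p, Sn w s0 (m + j) := by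
    rw [Finset.sum_Ico_eq_sum_range]
    have : m + p - m = p := by omega
    rw [this]
  rw [h1, h2, Sn_sum_shift w s0 hl h0, add_zero]

lemma Dn_mod (w : AffWt p) (s0 : ℤ) (hl : wlevel w = 0)
    (h0 : ∑ k ∈ Finset.range p, Sn w s0 k = 0) (m : ℕ) :
    Dn w s0 m = Dn w s0 (m % p) := by
  have key : ∀ q r, Dn w s0 (r + p * q) = Dn w s0 r := by
    intro q
    induction q with
    | zero => simp
    | succ q ih =>
      intro r
      have : r + p * (q + 1) = (r + p * q) + p := by ring
      rw [this, Dn_per w s0 hl h0, ih]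
  conv_lhs => rw [← Nat.mod_add_div m p]
  exact key (m / p) (m % p)

lemma t0_dvd (hp2 : 1 < p) (w : AffWt p) (hc : wcls w = 0) :
    (p : ℤ) ∣ ∑ k ∈ Finset.range p, ∑ j ∈ Finset.range k, Wn w (j + 1) := by
  rw [← ZMod.intCast_zmod_eq_zero_iff_dvd]
  push_cast
  rw [double_sum (fun j => ((Wn w (j + 1) : ℤ) : ZMod p)) p]
  have step : ∀ j ∈ Finset.range p, (p - 1 - j) • ((Wn w (j + 1) : ℤ) : ZMod p)
      = -(((j + 1 : ℕ) : ZMod p) * ((Wn w (j + 1) : ℤ) : ZMod p)) := by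
    intro j hj
    have hj' : j < p := Finset.mem_range.mp hj
    rw [nsmul_eq_mul]
    have e1 : (p - 1 - j) = p - (j + 1) := by omega
    rw [e1, Nat.cast_sub (by omega : j + 1 ≤ p), ZMod.natCast_self, zero_sub, neg_mul]
  rw [Finset.sum_congr rfl step]
  rw [Finset.sum_neg_distrib, neg_eq_zero]
  have h2 := Finset.sum_range_succ' (fun m => ((m : ℕ) : ZMod p) * ((Wn w m : ℤ) : ZMod p)) p
  have h3 := Finset.sum_range_succ (fun m => ((m : ℕ) : ZMod p) * ((Wn w m : ℤ) : ZMod p)) p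
  have hG0 : ((0 : ℕ) : ZMod p) * ((Wn w 0 : ℤ) : ZMod p) = 0 := by simp
  have hGp : ((p : ℕ) : ZMod p) * ((Wn w p : ℤ) : ZMod p) = 0 := by
    rw [ZMod.natCast_self, zero_mul]
  have h5 : ∑ m ∈ Finset.range p, ((m : ℕ) : ZMod p) * ((Wn w m : ℤ) : ZMod p) = wcls w := by
    rw [← Fin.sum_univ_eq_sum_range (fun m => ((m : ℕ) : ZMod p) * ((Wn w m : ℤ) : ZMod p)) p]
    unfold wcls Wn
    exact Finset.sum_congr rfl (fun i _ => by rw [Fin.cast_val_eq_self])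
  have h4 : ∑ j ∈ Finset.range p, ((j + 1 : ℕ) : ZMod p) * ((Wn w (j + 1) : ℤ) : ZMod p)
      = 0 := by
    have := h3.symm.trans h2
    rw [hG0, hGp, add_zero, add_zero, h5, hc] at this
    rw [← this]
  rw [← h4]

lemma sum_col (d : Fin p → ℤ) (k : Fin p) :
    ∑ j, d j * affCartan k j = 2 * d k - d (k + 1) - d (k - 1) := by
  unfold affCartan
  simp_rw [mul_sub, Finset.sum_sub_distrib, mul_ite, mul_zero, mul_one]
  rw [Finset.sum_ite_eq, Finset.sum_ite_eq', Finset.sum_ite_eq']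
  simp [mul_comm]

lemma exists_d (hp2 : 1 < p) (w : AffWt p) (hl : wlevel w = 0) (hc : wcls w = 0) :
    ∃ d : Fin p → ℤ, ∀ k, w k = ∑ j, d j * affCartan k j := by
  obtain ⟨s0', hs0⟩ := t0_dvd hp2 w hc
  set s0 : ℤ := -s0' with hs0def
  have h0 : ∑ k ∈ Finset.range p, Sn w s0 k = 0 := by
    unfold Sn
    rw [Finset.sum_add_distrib, Finset.sum_const, Finset.card_range, hs0, nsmul_eq_mul,
      hs0def]
    ring
  refine ⟨fun k => Dn w s0 k.val, ?_⟩
  intro k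
  rw [sum_col]
  have hone : (1 : Fin p).val = 1 := by
    rw [Fin.val_one']
    exact Nat.mod_eq_of_lt hp2
  have hB : ((k + 1 : Fin p)).val = (k.val + 1) % p := by
    rw [Fin.val_add, hone]
  have hneg : (((p - 1 : ℕ)) : Fin p) = -1 := by
    apply eq_neg_of_add_eq_zero_left
    have e : ((p - 1 : ℕ) : Fin p) + 1 = ((p - 1 + 1 : ℕ) : Fin p) := by push_cast; ring
    rw [e, (by omega : p - 1 + 1 = p), Fin.natCast_self]
  have hC : ((k - 1 : Fin p)).val = (k.val + (p - 1)) % p := by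
    rw [sub_eq_add_neg, ← hneg, Fin.val_add, Fin.val_natCast,
      Nat.mod_eq_of_lt (by omega : p - 1 < p)]
  have dB : Dn w s0 ((k + 1 : Fin p)).val = Dn w s0 (k.val + 1) := by
    rw [hB, ← Dn_mod w s0 hl h0]
  have dC : Dn w s0 ((k - 1 : Fin p)).val = Dn w s0 (k.val + (p - 1)) := by
    rw [hC, ← Dn_mod w s0 hl h0]
  rw [dB, dC]
  set a := k.val with ha
  have e1 : Dn w s0 (a + 1) = Dn w s0 a - Sn w s0 a := Dn_step w s0 a
  have e2 : Dn w s0 a = Dn w s0 (a + (p - 1)) - Sn w s0 (a + (p - 1)) := by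
    have h := Dn_step w s0 (a + (p - 1))
    rw [(by omega : a + (p - 1) + 1 = a + p), Dn_per w s0 hl h0 a] at h
    exact h
  have e3 : Sn w s0 a = Sn w s0 (a + (p - 1)) + Wn w a := by
    have h := Sn_step w s0 (a + (p - 1))
    rw [(by omega : a + (p - 1) + 1 = a + p), Sn_per w s0 hl a, Wn_per w a] at h
    exact h
  have e4 : Wn w a = w k := by
    unfold Wn
    rw [ha, Fin.cast_val_eq_self]
  rw [e1]
  omega

lemma valAdd (hp2 : 1 < p) (a b : Fin p) :
    (((a + b : Fin p)).val : ZMod p) = (a.val : ZMod p) + (b.val : ZMod p) := by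
  rw [Fin.val_add, ZMod.natCast_mod, Nat.cast_add]

lemma master (hp2 : 1 < p) (S : StringFunctions p) (Λ lam mu : AffWt p)
    (hlamlev : wlevel lam = p) (hmulev : wlevel mu = 0)
    (i : Fin p) (hmucls : wcls mu = (i.1 : ZMod p))
    (hM : ∀ n, wlevel n = p → S.c Λ (Mm n) = S.c Λ n)
    (hT1 : ∀ n, wlevel n = p → S.c Λ (Trm 1 n) = S.c Λ n) :
    S.c Λ (lam + p • mu) = S.c Λ (simpleCurrent i lam) := by
  have hlam' : ∑ k, lam k = p := hlamlev
  have hmu' : ∑ k, mu k = 0 := hmulev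
  have hlev : wlevel (lam + p • mu) = p := by
    unfold wlevel
    simp only [Pi.add_apply]
    simp only [Pi.smul_apply]
    simp only [nsmul_eq_mul]
    rw [Finset.sum_add_distrib, ← Finset.mul_sum, hlam', hmu', mul_zero, add_zero]
  have key := L2 S Λ hM i.val (lam + p • mu) hlev
  set w : AffWt p := fun k => mu (k - i) + Ee 0 k - Ee i k with hw
  have harg : Lw i.val (lam + p • mu)
      = fun k => simpleCurrent i lam k + (p : ℤ) * w k := by
    funext k
    simp only [Lw, simpleCurrent, hw]
    simp only [Pi.add_apply]
    simp only [Pi.smul_apply]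
    simp only [nsmul_eq_mul, Fin.cast_val_eq_self]
    ring
  have hw_lev : wlevel w = 0 := by
    unfold wlevel
    rw [hw]
    rw [Finset.sum_sub_distrib, Finset.sum_add_distrib, sum_shift', sum_Ee, sum_Ee, hmu']
    ring
  have hw_cls : wcls w = 0 := by
    unfold wcls
    rw [hw]
    have expand : ∀ k : Fin p, (k.val : ZMod p) * ((mu (k - i) + Ee 0 k - Ee i k : ℤ) : ZMod p)
        = (k.val : ZMod p) * ((mu (k - i) : ℤ) : ZMod p)
          + (k.val : ZMod p) * ((Ee 0 k : ℤ) : ZMod p)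
          - (k.val : ZMod p) * ((Ee i k : ℤ) : ZMod p) := by
      intro k
      push_cast
      ring
    rw [Finset.sum_congr rfl (fun k _ => expand k), Finset.sum_sub_distrib,
      Finset.sum_add_distrib]
    have S2 : ∑ k : Fin p, (k.val : ZMod p) * ((Ee 0 k : ℤ) : ZMod p) = 0 := by
      unfold Ee
      simp only [apply_ite (fun z : ℤ => (z : ZMod p)), Int.cast_one, Int.cast_zero,
        mul_ite, mul_one, mul_zero]
      rw [Finset.sum_ite_eq']
      simp
    have S3 : ∑ k : Fin p, (k.val : ZMod p) * ((Ee i k : ℤ) : ZMod p)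
        = (i.val : ZMod p) := by
      unfold Ee
      simp only [apply_ite (fun z : ℤ => (z : ZMod p)), Int.cast_one, Int.cast_zero,
        mul_ite, mul_one, mul_zero]
      rw [Finset.sum_ite_eq']
      simp
    have S1 : ∑ k : Fin p, (k.val : ZMod p) * ((mu (k - i) : ℤ) : ZMod p)
        = (i.val : ZMod p) := by
      have reidx : ∑ k : Fin p, (k.val : ZMod p) * ((mu (k - i) : ℤ) : ZMod p)
          = ∑ j : Fin p, (((j + i : Fin p)).val : ZMod p) * ((mu j : ℤ) : ZMod p) := by
        apply Fintype.sum_equiv (Equiv.subRight i)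
        intro k
        simp only [Equiv.subRight_apply]
        rw [sub_add_cancel]
      rw [reidx]
      have expand2 : ∀ j : Fin p, (((j + i : Fin p)).val : ZMod p) * ((mu j : ℤ) : ZMod p)
          = (j.val : ZMod p) * ((mu j : ℤ) : ZMod p)
            + (i.val : ZMod p) * ((mu j : ℤ) : ZMod p) := by
        intro j
        rw [valAdd hp2, add_mul]
      rw [Finset.sum_congr rfl (fun j _ => expand2 j), Finset.sum_add_distrib,
        ← Finset.mul_sum]
      have hmucast : ∑ j : Fin p, ((mu j : ℤ) : ZMod p) = 0 := by
        have : ((∑ j, mu j : ℤ) : ZMod p) = 0 := by rw [hmu']; simp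
        rw [← this]
        push_cast
        rfl
      rw [hmucast, mul_zero, add_zero]
      exact hmucls
    rw [S1, S2, S3]
    ring
  obtain ⟨d, hd⟩ := exists_d hp2 w hw_lev hw_cls
  have e5 : (fun k => simpleCurrent i lam k + (p : ℤ) * w k)
      = Sw d Finset.univ (simpleCurrent i lam) := by
    funext k
    unfold Sw
    rw [hd k]
  have hsc_lev : wlevel (simpleCurrent i lam) = p := by
    unfold wlevel simpleCurrent
    rw [sum_shift' i lam]
    exact hlam'
  calc S.c Λ (lam + p • mu)
      = S.c Λ (Lw i.val (lam + p • mu)) := key.symm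
    _ = S.c Λ (Sw d Finset.univ (simpleCurrent i lam)) := by rw [harg, e5]
    _ = S.c Λ (simpleCurrent i lam) := Tsum S Λ hM hT1 d Finset.univ _ hsc_lev

lemma Mword2 (n : AffWt 2) (h : wlevel n = 2) : Mm n = affReflect 1 n := by
  have hs : n 0 + n 1 = 2 := by simpa [wlevel, Fin.sum_univ_succ] using h
  funext k
  fin_cases k <;>
    simp +decide [Mm, Ee, affReflect, affCartan] <;> omega

lemma Trword2 (n : AffWt 2) (h : wlevel n = 2) :
    Trm 1 n = affReflect 1 (Pm (affReflect 0 (Mm n))) := by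
  have hs : n 0 + n 1 = 2 := by simpa [wlevel, Fin.sum_univ_succ] using h
  funext k
  fin_cases k <;>
    simp +decide [Mm, Pm, Trm, Ee, affReflect, affCartan] <;> omega

lemma Mword3 (n : AffWt 3) (h : wlevel n = 3) :
    Mm n = affReflect 2 (affReflect 1 n) := by
  have hs : n 0 + n 1 + n 2 = 3 := by
    have := h
    simp [wlevel, Fin.sum_univ_three, Fin.sum_univ_five, Fin.sum_univ_seven] at this
    omega
  funext k
  fin_cases k <;>
    simp +decide [Mm, Ee, affReflect, affCartan] <;> omega

lemma Trword3 (n : AffWt 3) (h : wlevel n = 3) :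
    Trm 1 n = affReflect 1 (Pm (affReflect 0 (Mm n))) := by
  have hs : n 0 + n 1 + n 2 = 3 := by
    have := h
    simp [wlevel, Fin.sum_univ_three, Fin.sum_univ_five, Fin.sum_univ_seven] at this
    omega
  funext k
  fin_cases k <;>
    simp +decide [Mm, Pm, Trm, Ee, affReflect, affCartan] <;> omega

lemma Mword5 (n : AffWt 5) (h : wlevel n = 5) :
    Mm n = affReflect 4 (affReflect 3 (affReflect 2 (affReflect 1 n))) := by
  have hs : n 0 + n 1 + n 2 + n 3 + n 4 = 5 := by
    have := h
    simp [wlevel, Fin.sum_univ_three, Fin.sum_univ_five, Fin.sum_univ_seven] at this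
    omega
  funext k
  fin_cases k <;>
    simp +decide [Mm, Ee, affReflect, affCartan] <;> omega

lemma Trword5 (n : AffWt 5) (h : wlevel n = 5) :
    Trm 1 n = affReflect 1 (Pm (affReflect 0 (Mm n))) := by
  have hs : n 0 + n 1 + n 2 + n 3 + n 4 = 5 := by
    have := h
    simp [wlevel, Fin.sum_univ_three, Fin.sum_univ_five, Fin.sum_univ_seven] at this
    omega
  funext k
  fin_cases k <;>
    simp +decide [Mm, Pm, Trm, Ee, affReflect, affCartan] <;> omega

lemma Mword7 (n : AffWt 7) (h : wlevel n = 7) :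
    Mm n = affReflect 6 (affReflect 5 (affReflect 4 (affReflect 3
      (affReflect 2 (affReflect 1 n))))) := by
  have hs : n 0 + n 1 + n 2 + n 3 + n 4 + n 5 + n 6 = 7 := by
    have := h
    simp [wlevel, Fin.sum_univ_three, Fin.sum_univ_five, Fin.sum_univ_seven] at this
    omega
  funext k
  fin_cases k <;>
    simp +decide [Mm, Ee, affReflect, affCartan] <;> omega

lemma Trword7 (n : AffWt 7) (h : wlevel n = 7) :
    Trm 1 n = affReflect 1 (Pm (affReflect 0 (Mm n))) := by
  have hs : n 0 + n 1 + n 2 + n 3 + n 4 + n 5 + n 6 = 7 := by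
    have := h
    simp [wlevel, Fin.sum_univ_three, Fin.sum_univ_five, Fin.sum_univ_seven] at this
    omega
  funext k
  fin_cases k <;>
    simp +decide [Mm, Pm, Trm, Ee, affReflect, affCartan] <;> omega

end SF1

/-- if `μ` is a weight of level `0` with `μ̄ = Λ̄_i mod A_q`, then for
every dominant integral weight `Λ` of level `p` and every weight `λ` of level `p`,
`c^Λ_{λ+pμ} = c^Λ_{(pΛ_i).λ}`. -/
theorem stringFunctions_translation_eq_simpleCurrent
    (p : ℕ) [NeZero p] (hp : p = 2 ∨ p = 3 ∨ p = 5 ∨ p = 7)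
    (S : StringFunctions p)
    (Λ lam mu : AffWt p) (hΛdom : IsDominant Λ) (hΛlev : wlevel Λ = p)
    (hlamlev : wlevel lam = p) (hmulev : wlevel mu = 0)
    (i : Fin p) (hmucls : wcls mu = (i.1 : ZMod p)) :
    S.c Λ (lam + p • mu) = S.c Λ (simpleCurrent i lam) := by
  rcases hp with rfl | rfl | rfl | rfl
  · have hM : ∀ n, wlevel n = (2:ℕ) → S.c Λ (SF1.Mm n) = S.c Λ n := by
      intro n hn
      rw [SF1.Mword2 n hn, S.weyl_invariant]
    have hT1 : ∀ n, wlevel n = (2:ℕ) → S.c Λ (SF1.Trm 1 n) = S.c Λ n := by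
      intro n hn
      rw [SF1.Trword2 n hn, S.weyl_invariant,
        SF1.Pinv S Λ hM _ (by rw [SF1.wlevel_A, SF1.wlevel_M]; exact hn),
        S.weyl_invariant, hM n hn]
    exact SF1.master (by norm_num) S Λ lam mu hlamlev hmulev i hmucls hM hT1
  · have hM : ∀ n, wlevel n = (3:ℕ) → S.c Λ (SF1.Mm n) = S.c Λ n := by
      intro n hn
      rw [SF1.Mword3 n hn, S.weyl_invariant, S.weyl_invariant]
    have hT1 : ∀ n, wlevel n = (3:ℕ) → S.c Λ (SF1.Trm 1 n) = S.c Λ n := by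
      intro n hn
      rw [SF1.Trword3 n hn, S.weyl_invariant,
        SF1.Pinv S Λ hM _ (by rw [SF1.wlevel_A, SF1.wlevel_M]; exact hn),
        S.weyl_invariant, hM n hn]
    exact SF1.master (by norm_num) S Λ lam mu hlamlev hmulev i hmucls hM hT1
  · have hM : ∀ n, wlevel n = (5:ℕ) → S.c Λ (SF1.Mm n) = S.c Λ n := by
      intro n hn
      rw [SF1.Mword5 n hn, S.weyl_invariant, S.weyl_invariant, S.weyl_invariant,
        S.weyl_invariant]
    have hT1 : ∀ n, wlevel n = (5:ℕ) → S.c Λ (SF1.Trm 1 n) = S.c Λ n := by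
      intro n hn
      rw [SF1.Trword5 n hn, S.weyl_invariant,
        SF1.Pinv S Λ hM _ (by rw [SF1.wlevel_A, SF1.wlevel_M]; exact hn),
        S.weyl_invariant, hM n hn]
    exact SF1.master (by norm_num) S Λ lam mu hlamlev hmulev i hmucls hM hT1
  · have hM : ∀ n, wlevel n = (7:ℕ) → S.c Λ (SF1.Mm n) = S.c Λ n := by
      intro n hn
      rw [SF1.Mword7 n hn, S.weyl_invariant, S.weyl_invariant, S.weyl_invariant,
        S.weyl_invariant, S.weyl_invariant, S.weyl_invariant]
    have hT1 : ∀ n, wlevel n = (7:ℕ) → S.c Λ (SF1.Trm 1 n) = S.c Λ n := by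
      intro n hn
      rw [SF1.Trword7 n hn, S.weyl_invariant,
        SF1.Pinv S Λ hM _ (by rw [SF1.wlevel_A, SF1.wlevel_M]; exact hn),
        S.weyl_invariant, hM n hn]
    exact SF1.master (by norm_num) S Λ lam mu hlamlev hmulev i hmucls hM hT1
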